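/- Let ι be a nonempty finite index type, let p, q : ι → ℝ with p_i > 0 and q_i > 0 for all i, and fix λ ∈ (0,1). Then Σ_{i∈ι} p_i^{1-λ} q_i^{λ} = (Σ_{i∈ι} p_i)^{1-λ} · (Σ_{i∈ι} q_i)^{λ} holds if and only if there exists a constant c > 0 with q_i = c · p_i for all i ∈ ι. -/

import Mathlib

open Real Finset

private lemma amgm2 {x y l : ℝ} (hx : 0 < x) (hy : 0 < y) (hl0 : 0 < l) (hl1 : l < 1) :
    x ^ (1 - l) * y ^ l ≤ (1 - l) * x + l * y := by
  have hs : -1 ≤ y / x - 1 := by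
    have : 0 < y / x := div_pos hy hx
    linarith
  have h := rpow_one_add_le_one_add_mul_self hs hl0.le hl1.le
  rw [add_sub_cancel] at h
  have h2 : x * ((y / x) ^ l) ≤ x * (1 + l * (y / x - 1)) :=
    mul_le_mul_of_nonneg_left h hx.le
  calc x ^ (1 - l) * y ^ l = x * (y / x) ^ l := by
        rw [Real.div_rpow hy.le hx.le, Real.rpow_sub hx, Real.rpow_one]
        field_simp
    _ ≤ x * (1 + l * (y / x - 1)) := h2
    _ = (1 - l) * x + l * y := by field_simp; ring

private lemma amgm2_strict {x y l : ℝ} (hx : 0 < x) (hy : 0 < y) (hl0 : 0 < l) (hl1 : l < 1)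
    (hne : x ≠ y) : x ^ (1 - l) * y ^ l < (1 - l) * x + l * y := by
  have hs : -1 ≤ y / x - 1 := by
    have : 0 < y / x := div_pos hy hx
    linarith
  have hs' : y / x - 1 ≠ 0 := by
    intro h
    apply hne
    have : y / x = 1 := by linarith
    field_simp at this
    linarith
  have h := rpow_one_add_lt_one_add_mul_self hs hs' hl0 hl1
  rw [add_sub_cancel] at h
  have h2 : x * ((y / x) ^ l) < x * (1 + l * (y / x - 1)) :=
    mul_lt_mul_of_pos_left h hx
  calc x ^ (1 - l) * y ^ l = x * (y / x) ^ l := by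
        rw [Real.div_rpow hy.le hx.le, Real.rpow_sub hx, Real.rpow_one]
        field_simp
    _ < x * (1 + l * (y / x - 1)) := h2
    _ = (1 - l) * x + l * y := by field_simp; ring

theorem sum_rpow_mul_rpow_eq_iff_proportional
    (ι : Type*) [Fintype ι] [Nonempty ι]
    (p q : ι → ℝ) (hp : ∀ i, 0 < p i) (hq : ∀ i, 0 < q i)
    (l : ℝ) (hl : l ∈ Set.Ioo (0 : ℝ) 1) :
    (∑ i, p i ^ (1 - l) * q i ^ l = (∑ i, p i) ^ (1 - l) * (∑ i, q i) ^ l)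
      ↔ ∃ c : ℝ, 0 < c ∧ ∀ i, q i = c * p i := by
  obtain ⟨hl0, hl1⟩ := hl
  have hP : 0 < ∑ i, p i := Finset.sum_pos (fun i _ => hp i) Finset.univ_nonempty
  have hQ : 0 < ∑ i, q i := Finset.sum_pos (fun i _ => hq i) Finset.univ_nonempty
  constructor
  · intro heq
    refine ⟨(∑ i, q i) / (∑ i, p i), div_pos hQ hP, fun i => ?_⟩
    -- show p i / P = q i / Q for all i
    by_contra hiq
    -- termwise AM-GM on a i = p i / P, b i = q i / Q
    set P := ∑ i, p i
    set Q := ∑ i, q i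
    have key : ∀ j, (p j / P) ^ (1 - l) * (q j / Q) ^ l ≤ (1-l) * (p j / P) + l * (q j / Q) :=
      fun j => amgm2 (div_pos (hp j) hP) (div_pos (hq j) hQ) hl0 hl1
    have keyi : (p i / P) ^ (1 - l) * (q i / Q) ^ l < (1-l) * (p i / P) + l * (q i / Q) := by
      apply amgm2_strict (div_pos (hp i) hP) (div_pos (hq i) hQ) hl0 hl1
      intro h
      apply hiq
      field_simp at h ⊢
      linarith [h]
    have hsum : ∑ j, (p j / P) ^ (1 - l) * (q j / Q) ^ l
        < ∑ j, ((1-l) * (p j / P) + l * (q j / Q)) :=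
      Finset.sum_lt_sum (fun j _ => key j) ⟨i, Finset.mem_univ i, keyi⟩
    have hrhs : ∑ j, ((1-l) * (p j / P) + l * (q j / Q)) = 1 := by
      rw [Finset.sum_add_distrib, ← Finset.mul_sum, ← Finset.mul_sum]
      simp only [div_eq_mul_inv, ← Finset.sum_mul]
      field_simp
      simp only [P, Q]; ring
    have hlhs : ∑ j, (p j / P) ^ (1 - l) * (q j / Q) ^ l = 1 := by
      have : ∀ j, (p j / P) ^ (1 - l) * (q j / Q) ^ l
          = (p j ^ (1 - l) * q j ^ l) / (P ^ (1 - l) * Q ^ l) := by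
        intro j
        rw [Real.div_rpow (hp j).le hP.le, Real.div_rpow (hq j).le hQ.le]
        field_simp
      rw [Finset.sum_congr rfl (fun j _ => this j), ← Finset.sum_div, heq]
      field_simp
    rw [hlhs, hrhs] at hsum
    exact lt_irrefl 1 hsum
  · rintro ⟨c, hc, hqc⟩
    have hq' : ∀ i, q i ^ l = c ^ l * p i ^ l := fun i => by
      rw [hqc i, Real.mul_rpow hc.le (hp i).le]
    have hsq : (∑ i, q i) = c * ∑ i, p i := by
      rw [Finset.mul_sum]; exact Finset.sum_congr rfl fun i _ => hqc i
    calc ∑ i, p i ^ (1 - l) * q i ^ l = ∑ i, c ^ l * p i := by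
          refine Finset.sum_congr rfl fun i _ => ?_
          rw [hq' i, mul_left_comm, ← Real.rpow_add (hp i), sub_add_cancel, Real.rpow_one]
      _ = c ^ l * ∑ i, p i := by rw [Finset.mul_sum]
      _ = (∑ i, p i) ^ (1 - l) * (∑ i, q i) ^ l := by
          rw [hsq, Real.mul_rpow hc.le hP.le, mul_left_comm, ← Real.rpow_add hP,
            sub_add_cancel, Real.rpow_one]
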